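/- Let n ≥ 4 and 3 ≤ m ≤ n−1. For every regular n-gon with center c, circumradius R > 0 and orientation θ, and every point M in its plane, the cyclic averages satisfy S_n^{(2m)} = (S_n^{(2)})^m + ∑_{k=1}^{⌊m/2⌋} (1/2^k)·C(m,2k)·C(2k,k)·(S_n^{(4)} − (S_n^{(2)})²)^k·(S_n^{(2)})^{m−2k}. -/

import Mathlib

open Complex Real Finset

lemma omega_pow_int (n : ℕ) (d : ℤ) :
    Complex.exp (2*π*Complex.I/n) ^ d = Complex.exp (d * (2*π*Complex.I/n)) :=
  (Complex.exp_int_mul _ d).symm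

lemma sum_omega (n : ℕ) (hn : 1 ≤ n) (d : ℤ) (hd : ¬ (n:ℤ) ∣ d) :
    ∑ k ∈ Finset.range n, (Complex.exp (2*π*Complex.I/n) ^ d) ^ k = 0 := by
  set ω := Complex.exp (2*π*Complex.I/n) with hωdef
  have hn0 : (n:ℂ) ≠ 0 := Nat.cast_ne_zero.mpr (by omega)
  have hπ : (π:ℂ) ≠ 0 := by exact_mod_cast Real.pi_ne_zero
  have hne : ω ^ d ≠ 1 := by
    rw [omega_pow_int, ne_eq, Complex.exp_eq_one_iff]
    push_neg
    intro t ht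
    apply hd
    refine ⟨t, ?_⟩
    field_simp at ht
    have h0 : (2*(π:ℂ)*Complex.I) ≠ 0 := by
      simp [hπ, Complex.I_ne_zero]
    have : (d:ℂ) = (n:ℂ) * t := mul_right_cancel₀ h0 (by linear_combination (2*(π:ℂ)*Complex.I) * ht)
    exact_mod_cast this
  have hωn : ω ^ (n:ℤ) = 1 := by
    rw [omega_pow_int]
    push_cast
    rw [show (n:ℂ) * (2*π*Complex.I/n) = 2*π*Complex.I by field_simp]
    exact Complex.exp_two_pi_mul_I
  have hpow : (ω ^ d) ^ n = 1 := by
    rw [← zpow_natCast (ω ^ d), ← zpow_mul, mul_comm, zpow_mul, hωn, one_zpow]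
  rw [geom_sum_eq hne, hpow, sub_self, zero_div]

lemma pow_prod {ω : ℂ} (hω : ω ≠ 0) (k s j : ℕ) (hsj : s ≤ j) :
    (ω^k)^s * ((ω⁻¹)^k)^(j-s) = (ω ^ ((2*s:ℤ) - j)) ^ k := by
  have h1 : (ω^k)^s = ω ^ ((k*s : ℤ)) := by
    rw [← pow_mul, ← zpow_natCast ω (k*s)]; push_cast; ring_nf
  have h2 : ((ω⁻¹)^k)^(j-s) = ω ^ (-(k*(j-s) : ℤ)) := by
    rw [← pow_mul, inv_pow, ← zpow_natCast ω (k*(j-s)), ← zpow_neg]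
    congr 1
    push_cast [Nat.cast_sub hsj]
    ring
  rw [h1, h2, ← zpow_add₀ hω, ← zpow_natCast (ω ^ ((2*s:ℤ) - j)) k, ← zpow_mul]
  congr 1
  push_cast [Nat.cast_sub hsj]
  ring

lemma trig_inner_sum (n j : ℕ) (hn : 1 ≤ n) (hj : j ≤ n - 1) (u : ℂ) :
    ∑ k ∈ Finset.range n,
        (-(u * Complex.exp (2*π*Complex.I/n)^k
            + (starRingEnd ℂ) u * ((Complex.exp (2*π*Complex.I/n))⁻¹)^k))^j
      = if Even j then (n:ℂ) * (j.choose (j/2) : ℂ) * (u * (starRingEnd ℂ) u)^(j/2)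
        else 0 := by
  set ω := Complex.exp (2*π*Complex.I/n) with hωdef
  have hω0 : ω ≠ 0 := Complex.exp_ne_zero _
  have step1 : ∀ k : ℕ,
      (-(u * ω^k + (starRingEnd ℂ) u * (ω⁻¹)^k))^j
        = (-1)^j * ∑ s ∈ Finset.range (j+1),
            (u^s * ((starRingEnd ℂ) u)^(j-s) * (j.choose s : ℂ)) * (ω ^ ((2*s:ℤ) - j))^k := by
    intro k
    rw [neg_pow, add_pow]
    congr 1
    refine Finset.sum_congr rfl fun s hs => ?_
    have hsj : s ≤ j := by simp at hs; omega
    rw [mul_pow, mul_pow, ← pow_prod hω0 k s j hsj]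
    ring
  calc ∑ k ∈ Finset.range n, (-(u * ω^k + (starRingEnd ℂ) u * (ω⁻¹)^k))^j
      = (-1)^j * ∑ s ∈ Finset.range (j+1),
          (u^s * ((starRingEnd ℂ) u)^(j-s) * (j.choose s : ℂ))
            * ∑ k ∈ Finset.range n, (ω ^ ((2*s:ℤ) - j))^k := by
        simp only [step1, ← Finset.mul_sum]
        congr 1
        rw [Finset.sum_comm]
        exact Finset.sum_congr rfl fun s _ => (Finset.mul_sum _ _ _).symm
    _ = (-1)^j * ∑ s ∈ Finset.range (j+1),
          (u^s * ((starRingEnd ℂ) u)^(j-s) * (j.choose s : ℂ))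
            * (if (2*s:ℤ) - j = 0 then (n:ℂ) else 0) := by
        congr 1
        refine Finset.sum_congr rfl fun s hs => ?_
        congr 1
        by_cases hd : (2*s:ℤ) - (j:ℤ) = 0
        · rw [if_pos hd, hd]
          simp
        · rw [if_neg hd, sum_omega n hn _ ?_]
          intro hdvd
          have hsj : s ≤ j := by simp at hs; omega
          have habs : |(2*s:ℤ) - j| < (n:ℤ) := by
            rw [abs_lt]; constructor <;> [skip; skip] <;> push_cast <;> omega
          exact hd (Int.eq_zero_of_abs_lt_dvd hdvd habs)
    _ = if Even j then (n:ℂ) * (j.choose (j/2) : ℂ) * (u * (starRingEnd ℂ) u)^(j/2)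
        else 0 := by
        by_cases hEv : Even j
        · rw [if_pos hEv]
          obtain ⟨p, hp⟩ := hEv
          have hj2 : j / 2 = p := by omega
          have hmem : p ∈ Finset.range (j+1) := by simp; omega
          rw [Finset.sum_congr rfl (fun s hs => ?_), Finset.sum_ite_eq' (Finset.range (j+1)) p
            (fun s => u^s * ((starRingEnd ℂ) u)^(j-s) * (j.choose s : ℂ) * n), if_pos hmem]
          · have : (-1:ℂ)^j = 1 := by
              rw [hp]; rw [show p + p = 2*p by ring, pow_mul]; norm_num
            rw [this, one_mul, hj2, mul_pow]
            have : j - p = p := by omega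
            rw [this]
            ring
          · rw [mul_ite, mul_zero]
            congr 1
            simp only [eq_iff_iff]
            constructor
            · intro h; omega
            · intro h; omega
        · rw [if_neg hEv]
          have : ∀ s ∈ Finset.range (j+1),
              (u^s * ((starRingEnd ℂ) u)^(j-s) * (j.choose s : ℂ))
                * (if (2*s:ℤ) - j = 0 then (n:ℂ) else 0) = 0 := by
            intro s hs
            rw [if_neg, mul_zero]
            intro h
            exact hEv ⟨s, by omega⟩
          rw [Finset.sum_eq_zero this, mul_zero]


lemma even_reindex (m : ℕ) (F : ℕ → ℂ) :
    ∑ j ∈ range (m+1), (if Even j then F j else 0)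
      = ∑ p ∈ range (m/2+1), F (2*p) := by
  rw [← Finset.sum_filter]
  apply Finset.sum_nbij' (i := fun j => j / 2) (j := fun p => 2 * p)
  · intro a ha; simp only [mem_filter, mem_range] at ha ⊢; omega
  · intro a ha; simp only [mem_filter, mem_range] at ha ⊢
    exact ⟨by omega, ⟨a, by ring⟩⟩
  · intro a ha; simp only [mem_filter, mem_range] at ha
    obtain ⟨-, b, hb⟩ := ha; omega
  · intro a ha; omega
  · intro a ha; simp only [mem_filter, mem_range] at ha
    obtain ⟨-, b, hb⟩ := ha
    congr 1; omega

lemma keyC (n m : ℕ) (hn : 1 ≤ n) (hm : m ≤ n - 1) (z w : ℂ) :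
    ∑ k ∈ Finset.range n,
        ((z - w * Complex.exp (2*π*Complex.I/n) ^ k) *
          (starRingEnd ℂ) (z - w * Complex.exp (2*π*Complex.I/n) ^ k)) ^ m
      = n * ∑ p ∈ Finset.range (m/2+1),
          ((m.choose (2*p) : ℂ) * ((2*p).choose p : ℂ))
            * (z * (starRingEnd ℂ) z + w * (starRingEnd ℂ) w) ^ (m - 2*p)
            * ((z * (starRingEnd ℂ) z) * (w * (starRingEnd ℂ) w)) ^ p := by
  set ω := Complex.exp (2*π*Complex.I/n) with hωdef
  have hω0 : ω ≠ 0 := Complex.exp_ne_zero _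
  have hωc : (starRingEnd ℂ) ω = ω⁻¹ := by
    rw [hωdef, ← Complex.exp_conj, ← Complex.exp_neg]
    congr 1
    simp [map_div₀, Complex.conj_I]
    rw [map_ofNat]; ring
  set u := (starRingEnd ℂ) z * w with hu
  set A := z * (starRingEnd ℂ) z + w * (starRingEnd ℂ) w with hA
  have hpt : ∀ k : ℕ, (z - w * ω^k) * (starRingEnd ℂ) (z - w * ω^k)
      = A - (u * ω^k + (starRingEnd ℂ) u * (ω⁻¹)^k) := by
    intro k
    have h1 : ω^k * (ω⁻¹)^k = 1 := by
      rw [inv_pow, mul_inv_cancel₀ (pow_ne_zero _ hω0)]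
    have h2 : (starRingEnd ℂ) (z - w * ω^k)
        = (starRingEnd ℂ) z - (starRingEnd ℂ) w * (ω⁻¹)^k := by
      rw [map_sub, map_mul, map_pow, hωc]
    have hcu : (starRingEnd ℂ) u = z * (starRingEnd ℂ) w := by
      rw [hu, map_mul, Complex.conj_conj]
    rw [h2, hcu, hu, hA]
    linear_combination (w * (starRingEnd ℂ) w) * h1
  calc ∑ k ∈ Finset.range n, ((z - w * ω^k) * (starRingEnd ℂ) (z - w * ω^k))^m
      = ∑ k ∈ Finset.range n, ∑ j ∈ Finset.range (m+1),
          (-(u * ω^k + (starRingEnd ℂ) u * (ω⁻¹)^k))^j * A^(m-j) * (m.choose j : ℂ) := by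
        refine Finset.sum_congr rfl fun k _ => ?_
        rw [hpt k, show A - (u * ω^k + (starRingEnd ℂ) u * (ω⁻¹)^k)
            = -(u * ω^k + (starRingEnd ℂ) u * (ω⁻¹)^k) + A by ring, add_pow]
    _ = ∑ j ∈ Finset.range (m+1),
          (∑ k ∈ Finset.range n, (-(u * ω^k + (starRingEnd ℂ) u * (ω⁻¹)^k))^j)
            * (A^(m-j) * (m.choose j : ℂ)) := by
        rw [Finset.sum_comm]
        refine Finset.sum_congr rfl fun j _ => ?_
        rw [Finset.sum_mul]
        exact Finset.sum_congr rfl fun k _ => by ring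
    _ = ∑ j ∈ Finset.range (m+1),
          (if Even j then (n:ℂ) * ((j.choose (j/2)) : ℂ) * (u * (starRingEnd ℂ) u)^(j/2)
            else 0) * (A^(m-j) * (m.choose j : ℂ)) := by
        refine Finset.sum_congr rfl fun j hj => ?_
        congr 1
        have hjm : j ≤ n - 1 := by simp at hj; omega
        exact trig_inner_sum n j hn hjm u
    _ = ∑ j ∈ Finset.range (m+1),
          (if Even j then
            (n:ℂ) * ((j.choose (j/2)) : ℂ) * (u * (starRingEnd ℂ) u)^(j/2)
              * (A^(m-j) * (m.choose j : ℂ)) else 0) := by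
        refine Finset.sum_congr rfl fun j _ => ?_
        rw [ite_mul, zero_mul]
    _ = ∑ p ∈ Finset.range (m/2+1),
          (n:ℂ) * (((2*p).choose ((2*p)/2)) : ℂ) * (u * (starRingEnd ℂ) u)^((2*p)/2)
            * (A^(m-2*p) * (m.choose (2*p) : ℂ)) := by
        rw [even_reindex m (fun j => (n:ℂ) * ((j.choose (j/2)) : ℂ)
          * (u * (starRingEnd ℂ) u)^(j/2) * (A^(m-j) * (m.choose j : ℂ)))]
    _ = n * ∑ p ∈ Finset.range (m/2+1),
          ((m.choose (2*p) : ℂ) * ((2*p).choose p : ℂ)) * A^(m-2*p)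
            * ((z * (starRingEnd ℂ) z) * (w * (starRingEnd ℂ) w))^p := by
        rw [Finset.mul_sum]
        refine Finset.sum_congr rfl fun p _ => ?_
        have h1 : (2*p)/2 = p := by omega
        have h2 : u * (starRingEnd ℂ) u = (z * (starRingEnd ℂ) z) * (w * (starRingEnd ℂ) w) := by
          rw [hu, map_mul, Complex.conj_conj]; ring
        rw [h1, h2]
        ring


lemma keyR (n m : ℕ) (hn : 1 ≤ n) (hm : m ≤ n - 1) (z w : ℂ) :
    ∑ k ∈ Finset.range n,
        (‖z - w * Complex.exp (2*π*Complex.I/n)^k‖) ^ (2*m)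
      = n * ∑ p ∈ Finset.range (m/2+1),
          (m.choose (2*p) : ℝ) * ((2*p).choose p : ℝ)
            * (Complex.normSq z + Complex.normSq w)^(m-2*p)
            * (Complex.normSq z * Complex.normSq w)^p := by
  have h := keyC n m hn hm z w
  rw [← Complex.ofReal_inj]
  push_cast
  have e1 : ∀ x : ℂ, ((‖x‖ : ℂ))^(2*m) = (x * (starRingEnd ℂ) x)^m := by
    intro x
    rw [pow_mul]
    congr 1
    rw [← Complex.ofReal_pow, Complex.sq_norm, Complex.mul_conj]
  have e2 : ∀ x : ℂ, ((Complex.normSq x : ℝ) : ℂ) = x * (starRingEnd ℂ) x :=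
    fun x => (Complex.mul_conj x).symm
  simp only [e1, e2]
  exact h

theorem cyclic_average_in_terms_of_S2_S4 (n m : ℕ) (hn : 4 ≤ n) (hm1 : 3 ≤ m) (hm2 : m ≤ n - 1)
    (c M : ℂ) (R θ : ℝ) (hR : 0 < R)
    (S2 S4 S2m : ℝ)
    (hS2 : S2 = (1 / n : ℝ) * ∑ k ∈ Finset.range n,
        (‖M - (c + R * Complex.exp (Complex.I * ((2 * π * k / n + θ : ℝ) : ℂ)))‖) ^ 2)
    (hS4 : S4 = (1 / n : ℝ) * ∑ k ∈ Finset.range n,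
        (‖M - (c + R * Complex.exp (Complex.I * ((2 * π * k / n + θ : ℝ) : ℂ)))‖) ^ 4)
    (hS2m : S2m = (1 / n : ℝ) * ∑ k ∈ Finset.range n,
        (‖M - (c + R * Complex.exp (Complex.I * ((2 * π * k / n + θ : ℝ) : ℂ)))‖) ^ (2 * m)) :
    S2m = S2 ^ m
      + ∑ k ∈ Finset.Icc 1 (m / 2),
          (1 / 2 ^ k : ℝ) * (m.choose (2 * k) : ℝ) * ((2 * k).choose k : ℝ)
            * (S4 - S2 ^ 2) ^ k * S2 ^ (m - 2 * k) := by
  have hn1 : 1 ≤ n := by omega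
  have hn0 : (n:ℝ) ≠ 0 := Nat.cast_ne_zero.mpr (by omega)
  set w : ℂ := (R:ℂ) * Complex.exp (Complex.I * (θ:ℂ)) with hw
  set z : ℂ := M - c with hz
  set A : ℝ := Complex.normSq z + Complex.normSq w with hA
  set Q : ℝ := Complex.normSq z * Complex.normSq w with hQ
  have hterm : ∀ k : ℕ,
      M - (c + R * Complex.exp (Complex.I * ((2 * π * k / n + θ : ℝ) : ℂ)))
        = z - w * Complex.exp (2*π*Complex.I/n)^k := by
    intro k
    have he : Complex.exp (Complex.I * ((2 * π * k / n + θ : ℝ) : ℂ))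
        = Complex.exp (Complex.I * (θ:ℂ)) * Complex.exp (2*π*Complex.I/n)^k := by
      rw [← Complex.exp_nat_mul, ← Complex.exp_add]
      congr 1
      push_cast
      ring
    rw [he, hw, hz]
    ring
  have key : ∀ m' : ℕ, m' ≤ n - 1 →
      (1 / n : ℝ) * ∑ k ∈ Finset.range n,
        (‖M - (c + R * Complex.exp (Complex.I * ((2 * π * k / n + θ : ℝ) : ℂ)))‖) ^ (2*m')
      = ∑ p ∈ Finset.range (m'/2+1),
          (m'.choose (2*p) : ℝ) * ((2*p).choose p : ℝ) * A^(m'-2*p) * Q^p := by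
    intro m' hm'
    rw [Finset.sum_congr rfl (fun k _ => by rw [hterm k]), keyR n m' hn1 hm' z w]
    rw [← mul_assoc, one_div, inv_mul_cancel₀ hn0, one_mul]
  have hS2A : S2 = A := by
    rw [hS2, show (2:ℕ) = 2*1 by norm_num, key 1 (by omega)]
    norm_num
  have hS4A : S4 = A^2 + 2*Q := by
    rw [hS4, show (4:ℕ) = 2*2 by norm_num, key 2 (by omega)]
    norm_num [Finset.sum_range_succ]
  have hS2mA : S2m = ∑ p ∈ Finset.range (m/2+1),
      (m.choose (2*p) : ℝ) * ((2*p).choose p : ℝ) * A^(m-2*p) * Q^p := by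
    rw [hS2m]; exact key m hm2
  have hdiff : S4 - S2^2 = 2*Q := by rw [hS4A, hS2A]; ring
  rw [hS2mA, hdiff, hS2A]
  have hset : Finset.range (m/2+1) = insert 0 (Finset.Icc 1 (m/2)) := by
    ext x; simp; omega
  rw [hset, Finset.sum_insert (by simp)]
  congr 1
  · simp
  · refine Finset.sum_congr rfl fun k hk => ?_
    have h2 : ((2:ℝ)*Q)^k = 2^k * Q^k := by rw [mul_pow]
    rw [h2]
    have h3 : (1/2^k : ℝ) * 2^k = 1 := by
      field_simp
    calc (m.choose (2*k) : ℝ) * ((2*k).choose k : ℝ) * A^(m-2*k) * Q^k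
        = ((1/2^k : ℝ) * 2^k) * ((m.choose (2*k) : ℝ) * ((2*k).choose k : ℝ) * A^(m-2*k) * Q^k) := by
          rw [h3, one_mul]
      _ = (1/2^k : ℝ) * (m.choose (2*k) : ℝ) * ((2*k).choose k : ℝ) * (2^k * Q^k) * A^(m-2*k) := by
          ring
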